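/- Let a > 0, T > 0 and c ∈ (0, T). Let y : (0, ∞) → [0, ∞) be a Lebesgue measurable function with ∫₀^∞ y(r) dr < ∞ which satisfies y(t) − y(s) ≤ a ∫ₛᵗ y(r) dr for all 0 < s ≤ t < T. Then for almost every t ∈ [c, T) one has y(t) ≤ exp(∫₀^T y(r) dr) · ( c⁻¹ ∫₀^T y(r) dr + a² c ). -/

import Mathlib

open MeasureTheory

/-- Lemma 8.3 (first part): if `y : (0,∞) → [0,∞)` is measurable with finite integral and
satisfies `y t - y s ≤ a ∫ₛᵗ y` for `0 < s ≤ t < T`, then a.e. on `[c,T)` one has the bound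
`y t ≤ exp(∫₀ᵀ y) (c⁻¹ ∫₀ᵀ y + a² c)`. -/
theorem stmt_0 (a T c : ℝ) (ha : 0 < a) (hT : 0 < T) (hc : c ∈ Set.Ioo 0 T)
    (y : ℝ → ℝ) (hy_meas : Measurable y)
    (hy_nonneg : ∀ t ∈ Set.Ioi (0:ℝ), 0 ≤ y t)
    (hy_int : ∫⁻ r in Set.Ioi (0:ℝ), ENNReal.ofReal (y r) < ⊤)
    (hineq : ∀ s t : ℝ, 0 < s → s ≤ t → t < T →
      y t - y s ≤ a * ∫ r in s..t, y r) :
    ∀ᵐ t ∂(volume.restrict (Set.Ico c T)),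
      y t ≤ Real.exp (∫ r in (0:ℝ)..T, y r) *
        (c⁻¹ * (∫ r in (0:ℝ)..T, y r) + a ^ 2 * c) := by
  obtain ⟨hc0, hcT⟩ := hc
  set I : ℝ := ∫ r in (0:ℝ)..T, y r with hI
  have hae : 0 ≤ᵐ[volume.restrict (Set.Ioi (0:ℝ))] y :=
    (ae_restrict_iff' measurableSet_Ioi).2 (Filter.Eventually.of_forall hy_nonneg)
  have hyI : IntegrableOn y (Set.Ioi (0:ℝ)) := by
    refine ⟨hy_meas.aestronglyMeasurable, ?_⟩
    rw [hasFiniteIntegral_iff_ofReal hae]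
    exact hy_int
  have hyIoc : IntegrableOn y (Set.Ioc 0 T) := hyI.mono_set Set.Ioc_subset_Ioi_self
  have haeIoc : 0 ≤ᵐ[volume.restrict (Set.Ioc (0:ℝ) T)] y :=
    (ae_restrict_iff' measurableSet_Ioc).2
      (Filter.Eventually.of_forall fun x hx => hy_nonneg x hx.1)
  have hIeq : I = ∫ r in Set.Ioc (0:ℝ) T, y r := intervalIntegral.integral_of_le hT.le
  have hInn : 0 ≤ I := by
    rw [hIeq]
    exact setIntegral_nonneg measurableSet_Ioc (fun x hx => hy_nonneg x hx.1)
  -- main pointwise bound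
  have key : ∀ t ∈ Set.Ico c T, y t ≤ c⁻¹ * I + a * I := by
    intro t ⟨hct, htT⟩
    have htc : 0 ≤ t - c := by linarith
    -- for each s in (t-c, t], y t - a*I ≤ y s
    have hpt : ∀ s ∈ Set.Ioc (t - c) t, y t - a * I ≤ y s := by
      intro s ⟨hs1, hs2⟩
      have hs0 : 0 < s := lt_of_le_of_lt htc hs1
      have h1 : y t - y s ≤ a * ∫ r in s..t, y r := hineq s t hs0 hs2 htT
      have h2 : (∫ r in s..t, y r) ≤ I := by
        rw [intervalIntegral.integral_of_le hs2, hIeq]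
        refine setIntegral_mono_set hyIoc haeIoc ?_
        exact (Set.Ioc_subset_Ioc hs0.le htT.le).eventuallyLE
      nlinarith
    have hmeas : MeasurableSet (Set.Ioc (t - c) t) := measurableSet_Ioc
    have hμ : volume (Set.Ioc (t - c) t) ≠ ⊤ := by
      simp [Real.volume_Ioc]
    have hint : IntegrableOn y (Set.Ioc (t - c) t) := by
      refine hyI.mono_set ?_
      intro x hx
      exact lt_of_le_of_lt htc hx.1
    have h3 : (y t - a * I) * (volume (Set.Ioc (t - c) t)).toReal
        ≤ ∫ s in Set.Ioc (t - c) t, y s := by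
      exact setIntegral_ge_of_const_le_real hmeas hμ hpt hint
    have hvol : (volume (Set.Ioc (t - c) t)).toReal = c := by
      rw [Real.volume_Ioc]
      rw [ENNReal.toReal_ofReal (by linarith)]
      ring_nf
    have h4 : (∫ s in Set.Ioc (t - c) t, y s) ≤ I := by
      rw [hIeq]
      refine setIntegral_mono_set hyIoc haeIoc ?_
      exact (Set.Ioc_subset_Ioc htc htT.le).eventuallyLE
    rw [hvol] at h3
    have hc0' : 0 < c⁻¹ := inv_pos.2 hc0
    have h5 : (y t - a * I) * c ≤ I := le_trans h3 h4
    nlinarith [mul_le_mul_of_nonneg_left h5 hc0'.le, mul_inv_cancel₀ hc0.ne']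
  rw [ae_restrict_iff' measurableSet_Ico]
  refine Filter.Eventually.of_forall fun t ht => ?_
  have h1 := key t ht
  have h2 : I + 1 ≤ Real.exp I := Real.add_one_le_exp I
  have hc0' : 0 < c⁻¹ := inv_pos.2 hc0
  have hcc : c * c⁻¹ = 1 := mul_inv_cancel₀ hc0.ne'
  have hE1 : (1:ℝ) ≤ Real.exp I := by linarith
  have h' : a * c * I ≤ I ^ 2 + a ^ 2 * c ^ 2 := by
    nlinarith [sq_nonneg (I - a * c), mul_nonneg (mul_nonneg ha.le hc0.le) hInn]
  have hAM : a * I ≤ c⁻¹ * I ^ 2 + a ^ 2 * c := by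
    nlinarith [mul_le_mul_of_nonneg_left h' hc0'.le, hcc]
  nlinarith [mul_le_mul_of_nonneg_left h2 (mul_nonneg hInn hc0'.le),
    mul_le_mul_of_nonneg_left hE1 (mul_nonneg (sq_nonneg a) hc0.le), hAM]
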